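/- Let g be a semisimple Lie algebra over a field of characteristic 0. Then the only Poisson structure on g is the trivial one: if ∘ is a commutative associative product on g such that every ad_u is a derivation of ∘, then u∘v = 0 for all u,v. -/

import Mathlib

/-- A product `α` on a Lie algebra is Lie-admissible if `α(u,v) - α(v,u) = ⁅u,v⁆`. -/
def LieAdmissible {K L : Type*} [Field K] [LieRing L] [LieAlgebra K L]
    (α : L →ₗ[K] L →ₗ[K] L) : Prop :=
  ∀ u v : L, α u v - α v u = ⁅u, v⁆

/-- A product `α` on a Lie algebra is bi-invariant if every `ad_u` is a derivation of it. -/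
def BiInvariant {K L : Type*} [Field K] [LieRing L] [LieAlgebra K L]
    (α : L →ₗ[K] L →ₗ[K] L) : Prop :=
  ∀ u v w : L, ⁅u, α v w⁆ = α ⁅u, v⁆ w + α v ⁅u, w⁆

/-- A quasi-canonical product: Lie-admissible, bi-invariant, with curvature
`K^α(u,v) = [L_u, L_v] - L_{[u,v]}` equal to `-(1/4) ad_{[u,v]}`. -/
def QuasiCanonical {K L : Type*} [Field K] [LieRing L] [LieAlgebra K L]
    (α : L →ₗ[K] L →ₗ[K] L) : Prop :=
  LieAdmissible α ∧ BiInvariant α ∧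
    ∀ u v w : L, α u (α v w) - α v (α u w) - α ⁅u, v⁆ w = -((4 : K)⁻¹ • ⁅⁅u, v⁆, w⁆)


open Module Polynomial

/-- A linear endomorphism of a finite-dimensional vector space over a field of characteristic
zero, all of whose positive powers have trace zero, is nilpotent. -/
theorem isNilpotent_of_trace_pow_eq_zero' {K : Type*} [Field K] [CharZero K] :
    ∀ (d : ℕ) (V : Type*) [AddCommGroup V] [Module K V] [FiniteDimensional K V],
      Module.finrank K V ≤ d → ∀ f : Module.End K V,
      (∀ k : ℕ, LinearMap.trace K V (f ^ (k + 1)) = 0) → IsNilpotent f := by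
  intro d
  induction d with
  | zero =>
    intro V _ _ _ hV f _
    rw [Nat.le_zero] at hV
    have : Subsingleton V := Module.finrank_zero_iff.mp hV
    exact ⟨1, Subsingleton.elim _ _⟩
  | succ d ih =>
    intro V _ _ _ hV f hf
    rcases Nat.eq_zero_or_pos (Module.finrank K V) with h0 | hpos
    · have : Subsingleton V := Module.finrank_zero_iff.mp h0
      exact ⟨1, Subsingleton.elim _ _⟩
    -- the constant coefficient of the characteristic polynomial vanishes
    have htr : LinearMap.trace K V (Polynomial.aeval f (LinearMap.charpoly f)) = 0 := by
      rw [LinearMap.aeval_self_charpoly]; simp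
    rw [Polynomial.aeval_eq_sum_range, map_sum] at htr
    rw [Finset.sum_eq_single_of_mem 0 (Finset.mem_range.mpr (Nat.succ_pos _))
      (fun i _ hi => by
        obtain ⟨k, rfl⟩ := Nat.exists_eq_succ_of_ne_zero hi
        rw [map_smul, hf k, smul_zero])] at htr
    rw [map_smul, pow_zero, LinearMap.trace_one, smul_eq_mul, mul_eq_zero] at htr
    have hc0 : (LinearMap.charpoly f).coeff 0 = 0 := by
      rcases htr with h | h
      · exact h
      · exact absurd h (by exact_mod_cast hpos.ne')
    obtain ⟨m0, hm0, hfm0⟩ := (LinearMap.charpoly_constantCoeff_eq_zero_iff f).mp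
      (by rwa [constantCoeff_apply])
    -- restrict to the range of `f`
    have hfW : ∀ x, f x ∈ LinearMap.range f := fun x => LinearMap.mem_range_self f x
    have hWW : ∀ x ∈ LinearMap.range f, f x ∈ LinearMap.range f := fun x _ => hfW x
    have hker : 0 < Module.finrank K (LinearMap.ker f) := by
      have : Nontrivial (LinearMap.ker f) := by
        refine ⟨⟨⟨m0, by simp [LinearMap.mem_ker, hfm0]⟩, 0, ?_⟩⟩
        simp only [ne_eq, Submodule.mk_eq_zero]
        exact hm0
      exact Module.finrank_pos_iff.mpr this
    have hrange : Module.finrank K (LinearMap.range f) ≤ d := by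
      have := LinearMap.finrank_range_add_finrank_ker f
      omega
    have hres : ∀ k : ℕ,
        LinearMap.trace K (LinearMap.range f) ((f.restrict hWW) ^ (k + 1)) = 0 := by
      intro k
      rw [Module.End.pow_restrict]
      have hmem : ∀ x, (f ^ (k + 1)) x ∈ LinearMap.range f := by
        intro x
        rw [pow_succ', Module.End.mul_apply]
        exact hfW _
      rw [LinearMap.trace_restrict_eq_of_forall_mem _ _ hmem]
      exact hf k
    obtain ⟨m, hm⟩ := ih (LinearMap.range f) hrange (f.restrict hWW) hres
    refine ⟨m + 1, ?_⟩
    ext x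
    rw [LinearMap.zero_apply, pow_succ, Module.End.mul_apply]
    have : (f.restrict hWW) ^ m = (f ^ m).restrict (Module.End.pow_apply_mem_of_forall_mem m hWW) :=
      Module.End.pow_restrict m hWW
    have h2 := congrArg (fun g => g ⟨f x, hfW x⟩) (this ▸ hm)
    simpa using congrArg Subtype.val h2

section Perfect

variable {K L : Type*} [Field K] [LieRing L] [LieAlgebra K L]
  [FiniteDimensional K L] [LieAlgebra.IsSemisimple K L]

omit [FiniteDimensional K L] in
/-- A semisimple Lie algebra is perfect. -/
theorem semisimple_perfect :
    (⁅(⊤ : LieIdeal K L), (⊤ : LieIdeal K L)⁆ : LieIdeal K L) = ⊤ := by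
  set I : LieIdeal K L := ⁅(⊤ : LieIdeal K L), (⊤ : LieIdeal K L)⁆ with hI
  have h1 : ⁅Iᶜ, Iᶜ⁆ ≤ I ⊓ Iᶜ :=
    le_inf (LieSubmodule.mono_lie le_top le_top) (LieSubmodule.lie_le_right _ _)
  rw [inf_compl_eq_bot] at h1
  have h2 : (⁅Iᶜ, Iᶜ⁆ : LieIdeal K L) = ⊥ := le_bot_iff.mp h1
  rw [LieSubmodule.lie_eq_bot_iff] at h2
  have habel : IsLieAbelian (Iᶜ : LieIdeal K L) := by
    constructor
    intro x y
    have : (⁅(x : L), (y : L)⁆ : L) = 0 := h2 x x.2 y y.2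
    ext
    simpa [LieIdeal.coe_bracket_of_module] using this
  have : Iᶜ = ⊥ :=
    (LieAlgebra.hasTrivialRadical_iff_no_abelian_ideals K L).mp inferInstance _ habel
  rwa [compl_eq_bot] at this

end Perfect

attribute [local instance] LieRing.ofAssociativeRing
attribute [local instance] LieAlgebra.ofAssociativeAlgebra

/-- a finite-dimensional semisimple Lie algebra over a field of
characteristic zero admits only the trivial Poisson structure. -/
theorem stmt15 {K L : Type*} [Field K] [CharZero K] [LieRing L] [LieAlgebra K L]
    [FiniteDimensional K L] [LieAlgebra.IsSemisimple K L]
    (c : L →ₗ[K] L →ₗ[K] L)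
    (hcomm : ∀ u v : L, c u v = c v u)
    (hassoc : ∀ u v w : L, c (c u v) w = c u (c v w))
    (hder : ∀ u v w : L, ⁅u, c v w⁆ = c ⁅u, v⁆ w + c v ⁅u, w⁆) :
    ∀ u v : L, c u v = 0 := by

  classical
  -- multiplication operators compose according to the product
  have hmul : ∀ a b : L, (c a : Module.End K L) * c b = c (c a b) := by
    intro a b; ext w
    simp only [Module.End.mul_apply]
    rw [← hassoc]
  -- multiplication operators commute
  have hcommEnd : ∀ a b : L, (c a : Module.End K L) * c b = c b * c a := by
    intro a b; rw [hmul, hmul, hcomm]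
  -- the bracket relation
  have hbr : ∀ x a : L, (c ⁅x, a⁆ : Module.End K L)
      = LieAlgebra.ad K L x * c a - c a * LieAlgebra.ad K L x := by
    intro x a; ext w
    simp only [Module.End.mul_apply, LinearMap.sub_apply, LieAlgebra.ad_apply]
    have := hder x a w
    rw [this]
    abel
  -- trace of every multiplication operator is zero
  have htr : ∀ x : L, LinearMap.trace K L (c x) = 0 := by
    intro x
    have hx' : x ∈ (⁅(⊤ : LieIdeal K L), (⊤ : LieIdeal K L)⁆ : LieIdeal K L) := by
      rw [semisimple_perfect]
      exact LieSubmodule.mem_top x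
    rw [← LieSubmodule.mem_toSubmodule, LieSubmodule.lieIdeal_oper_eq_linear_span'] at hx'
    induction hx' using Submodule.span_induction with
    | mem z hz =>
      obtain ⟨a, -, b, -, rfl⟩ := hz
      rw [hbr a b, map_sub, LinearMap.trace_mul_comm, sub_self]
    | zero => simp
    | add p q _ _ hp hq => rw [map_add, map_add, hp, hq, add_zero]
    | smul t p _ hp => rw [map_smul, map_smul, hp, smul_zero]
  -- every multiplication operator is nilpotent
  have hnil : ∀ a : L, IsNilpotent (c a : Module.End K L) := by
    intro a
    apply isNilpotent_of_trace_pow_eq_zero' (Module.finrank K L) L le_rfl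
    intro k
    have hex : ∀ k : ℕ, ∃ w : L, (c a : Module.End K L) ^ (k + 1) = c w := by
      intro k
      induction k with
      | zero => exact ⟨a, pow_one _⟩
      | succ k ihh =>
        obtain ⟨w, hw⟩ := ihh
        exact ⟨c a w, by rw [pow_succ', hw, hmul]⟩
    obtain ⟨w, hw⟩ := hex k
    rw [hw]
    exact htr w
  -- the commutative Lie subalgebra of multiplication operators
  let L' : LieSubalgebra K (Module.End K L) :=
    { toSubmodule := LinearMap.range c
      lie_mem' := by
        intro x y hx hy
        obtain ⟨a, rfl⟩ := hx
        obtain ⟨b, rfl⟩ := hy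
        show ⁅(c a : Module.End K L), c b⁆ ∈ LinearMap.range c
        rw [Ring.lie_def, hcommEnd, sub_self]
        exact Submodule.zero_mem _ }
  -- Engel's theorem: L acted on by L' is a nilpotent module
  have hnilmod : LieModule.IsNilpotent L' L := by
    apply LieAlgebra.isEngelian_of_isNoetherian (R := K)
    intro x
    have hx : LieModule.toEnd K L' L x = (x : Module.End K L) := by
      ext m
      rw [LieModule.toEnd_apply_apply]
      rfl
    obtain ⟨a, ha⟩ := x.2
    rw [hx, ← ha]
    exact hnil a
  -- products push down the lower central series
  have hsucc : ∀ (n : ℕ) (a w : L), w ∈ LieModule.lowerCentralSeries K L' L n →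
      c a w ∈ LieModule.lowerCentralSeries K L' L (n + 1) := by
    intro n a w hw
    rw [LieModule.lowerCentralSeries_succ]
    have : c a w = ⁅(⟨c a, LinearMap.mem_range_self c a⟩ : L'), w⁆ := rfl
    rw [this]
    exact LieSubmodule.lie_mem_lie (LieSubmodule.mem_top _) hw
  -- the lower central series terms are stable under the adjoint action of L
  have hstab : ∀ (n : ℕ) (x w : L), w ∈ LieModule.lowerCentralSeries K L' L n →
      ⁅x, w⁆ ∈ LieModule.lowerCentralSeries K L' L n := by
    intro n
    induction n with
    | zero => intro x w _; exact LieSubmodule.mem_top _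
    | succ n ihn =>
      intro x w hw
      have hw' : w ∈ (LieModule.lowerCentralSeries K L' L (n + 1)) := hw
      clear hw
      rw [← LieSubmodule.mem_toSubmodule, LieModule.lowerCentralSeries_succ,
        LieSubmodule.lieIdeal_oper_eq_linear_span'] at hw'
      induction hw' using Submodule.span_induction with
      | mem z hz =>
        obtain ⟨g, -, w', hw'', rfl⟩ := hz
        have hg2 : (g : Module.End K L) ∈ LinearMap.range c := g.2
        obtain ⟨a, ha⟩ := hg2
        have hgw : (⁅g, w'⁆ : L) = c a w' := by
          have h0 : (⁅g, w'⁆ : L) = (g : Module.End K L) w' := rfl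
          rw [h0, ← ha]
        rw [hgw, hder]
        exact add_mem (hsucc n _ _ hw'') (hsucc n _ _ (ihn x w' hw''))
      | zero => simp
      | add p q _ _ hp hq => rw [lie_add]; exact add_mem hp hq
      | smul t p _ hp => rw [lie_smul]; exact Submodule.smul_mem _ _ hp
  -- descending step: if a tail term vanishes, so does the previous one (index ≥ 1)
  have hdesc : ∀ n : ℕ, LieModule.lowerCentralSeries K L' L (n + 2) = ⊥ →
      LieModule.lowerCentralSeries K L' L (n + 1) = ⊥ := by
    intro n h2
    have hzero : ∀ (a z : L), z ∈ LieModule.lowerCentralSeries K L' L (n + 1) → c a z = 0 := by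
      intro a z hz
      have := hsucc (n + 1) a z hz
      rwa [h2, LieSubmodule.mem_bot] at this
    have hbracket : ∀ x ∈ LieModule.lowerCentralSeries K L' L (n + 1),
        ∀ y ∈ LieModule.lowerCentralSeries K L' L (n + 1), (⁅x, y⁆ : L) = 0 := by
      intro x hx y hy
      have hx' : x ∈ (LieModule.lowerCentralSeries K L' L (n + 1)) := hx
      clear hx
      rw [← LieSubmodule.mem_toSubmodule, LieModule.lowerCentralSeries_succ,
        LieSubmodule.lieIdeal_oper_eq_linear_span'] at hx'
      induction hx' using Submodule.span_induction with
      | mem z hz =>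
        obtain ⟨g, -, w, hw, rfl⟩ := hz
        have hg2 : (g : Module.End K L) ∈ LinearMap.range c := g.2
        obtain ⟨a, ha⟩ := hg2
        have hgw : (⁅g, w⁆ : L) = c a w := by
          have h0 : (⁅g, w⁆ : L) = (g : Module.End K L) w := rfl
          rw [h0, ← ha]
        have hya : ⁅y, a⁆ ∈ LieModule.lowerCentralSeries K L' L (n + 1) := by
          rw [← lie_skew]
          exact neg_mem (hstab (n + 1) a y hy)
        have hyw : ⁅y, w⁆ ∈ LieModule.lowerCentralSeries K L' L (n + 1) := by
          rw [← lie_skew]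
          exact neg_mem (hstab (n + 1) w y hy)
        have t1 : c ⁅y, a⁆ w = 0 := by
          rw [hcomm]
          exact hzero w _ hya
        have t2 : c a ⁅y, w⁆ = 0 := hzero a _ hyw
        rw [hgw, ← lie_skew, hder, t1, t2, add_zero, neg_zero]
      | zero => simp
      | add p q _ _ hp hq => rw [add_lie, hp, hq, add_zero]
      | smul t p _ hp => rw [smul_lie, hp, smul_zero]
    -- the term is an abelian ideal of L, hence trivial by semisimplicity
    let I : LieIdeal K L :=
      { toSubmodule := (LieModule.lowerCentralSeries K L' L (n + 1) : Submodule K L)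
        lie_mem := fun {x m} hm => hstab (n + 1) x m hm }
    have habel : IsLieAbelian I := by
      constructor
      intro a b
      have := hbracket a.1 a.2 b.1 b.2
      ext
      simpa [LieIdeal.coe_bracket_of_module] using this
    have hIbot : I = ⊥ :=
      (LieAlgebra.hasTrivialRadical_iff_no_abelian_ideals K L).mp inferInstance I habel
    rw [LieSubmodule.eq_bot_iff]
    intro m hm
    have hmI : m ∈ I := hm
    rw [hIbot] at hmI
    simpa using hmI
  -- conclude
  obtain ⟨k0, hk0⟩ := LieModule.IsNilpotent.nilpotent K L' L
  intro u v
  cases k0 with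
  | zero =>
    -- LCS 0 = ⊤ = ⊥ : L is trivial
    have hu : u ∈ (⊥ : LieSubmodule K L' L) := by
      rw [← hk0]
      exact LieSubmodule.mem_top _
    rw [LieSubmodule.mem_bot] at hu
    rw [hu]
    simp
  | succ k =>
    have hone : LieModule.lowerCentralSeries K L' L 1 = ⊥ := by
      clear hcomm hassoc hder u v
      induction k with
      | zero => exact hk0
      | succ k ihk => exact ihk (hdesc k hk0)
    have : c u v ∈ LieModule.lowerCentralSeries K L' L 1 := by
      apply hsucc 0 u v
      exact LieSubmodule.mem_top _
    rwa [hone, LieSubmodule.mem_bot] at this
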